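/- arXiv:2109.06656 — 3 statements merged into one kernel-verified Lean document; each statement's English description precedes it below -/
import Mathlib

section
/- For any two information structures u, v on K × C × D (finite sets, u and v probability distributions), and any zero-sum payoff function g : K × I × J → [-1,1] with finite action sets, the difference of values satisfies |val(u,g) - val(v,g)| ≤ ‖u - v‖₁, where ‖u - v‖₁ = Σ_{k,c,d} |u(k,c,d) - v(k,c,d)|. -/
open scoped BigOperators

noncomputable section

/-- A probability distribution on a finite type, given as a nonnegative function summing to 1. -/
def IsDist {α : Type*} [Fintype α] (u : α → ℝ) : Prop :=
  (∀ a, 0 ≤ u a) ∧ ∑ a, u a = 1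

/-- A garbling (stochastic map / behavioral strategy). -/
def IsKernel {α β : Type*} [Fintype β] (q : α → β → ℝ) : Prop :=
  ∀ a, IsDist (q a)

/-- Expected payoff in the zero-sum Bayesian game `Γ(u,g)` when players use
behavioral strategies `σ` and `τ`. -/
def pay {K C D I J : Type*} [Fintype K] [Fintype C] [Fintype D] [Fintype I] [Fintype J]
    (u : K × C × D → ℝ) (g : K → I → J → ℝ) (σ : C → I → ℝ) (τ : D → J → ℝ) : ℝ :=
  ∑ k, ∑ c, ∑ d, ∑ i, ∑ j, u (k, c, d) * σ c i * τ d j * g k i j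

/-- The value (maxmin) of the zero-sum Bayesian game `Γ(u,g)`, player 1 maximizing. -/
def gameVal {K C D I J : Type*} [Fintype K] [Fintype C] [Fintype D] [Fintype I] [Fintype J]
    (u : K × C × D → ℝ) (g : K → I → J → ℝ) : ℝ :=
  sSup {x : ℝ | ∃ σ : C → I → ℝ, IsKernel σ ∧
    x = sInf {y : ℝ | ∃ τ : D → J → ℝ, IsKernel τ ∧ y = pay u g σ τ}}

/-- Garbling of player 1's signal: `(q.u)(k,c,d) = ∑ c', u(k,c',d) q(c|c')`. -/
def garbleL {K C C' D : Type*} [Fintype C] (q : C → C' → ℝ) (u : K × C × D → ℝ) :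
    K × C' × D → ℝ :=
  fun x => ∑ c, u (x.1, c, x.2.2) * q c x.2.1

/-- Garbling of player 2's signal: `(u.q)(k,c,d) = ∑ d', u(k,c,d') q(d|d')`. -/
def garbleR {K C D D' : Type*} [Fintype D] (q : D → D' → ℝ) (u : K × C × D → ℝ) :
    K × C × D' → ℝ :=
  fun x => ∑ d, u (x.1, x.2.1, d) * q d x.2.2

/-- ℓ¹ distance. -/
def l1 {α : Type*} [Fintype α] (u v : α → ℝ) : ℝ := ∑ a, |u a - v a|

/-- Payoff functions bounded by 1. -/
def Bounded1 {K I J : Type*} (g : K → I → J → ℝ) : Prop := ∀ k i j, |g k i j| ≤ 1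

/-- The value-based distance: sup over all finite zero-sum games (with nonempty
finite action sets, payoffs bounded by 1) of the absolute difference of values. -/
def valueDist {K C D C' D' : Type*} [Fintype K] [Fintype C] [Fintype D] [Fintype C'] [Fintype D']
    (u : K × C × D → ℝ) (v : K × C' × D' → ℝ) : ℝ :=
  sSup {x : ℝ | ∃ (m n : ℕ) (g : K → Fin (m + 1) → Fin (n + 1) → ℝ),
    Bounded1 g ∧ x = |gameVal u g - gameVal v g|}

/-- Value of a single-agent decision problem on a single-agent information structure. -/
def val1 {K C I : Type*} [Fintype K] [Fintype C] [Fintype I] [Nonempty I]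
    (u : K × C → ℝ) (g : K → I → ℝ) : ℝ :=
  ∑ c, ⨆ i, ∑ k, u (k, c) * g k i

/-- The single-agent value-based distance. -/
def valueDist1 {K C C' : Type*} [Fintype K] [Fintype C] [Fintype C']
    (u : K × C → ℝ) (v : K × C' → ℝ) : ℝ :=
  sSup {x : ℝ | ∃ (m : ℕ) (g : K → Fin (m + 1) → ℝ),
    (∀ k i, |g k i| ≤ 1) ∧ x = |val1 u g - val1 v g|}

/-- Garbling of the signal in a single-agent structure. -/
def garble1 {K C C' : Type*} [Fintype C] (q : C → C' → ℝ) (u : K × C → ℝ) : K × C' → ℝ :=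
  fun x => ∑ c, u (x.1, c) * q c x.2

end

section helpers

variable {K C D I J : Type*} [Fintype K] [Fintype C] [Fintype D] [Fintype I] [Fintype J]

lemma kernel_exists {α β : Type*} [Fintype β] [Nonempty β] :
    ∃ q : α → β → ℝ, IsKernel q := by
  classical
  refine ⟨fun _ b => if b = Classical.arbitrary β then 1 else 0, fun a => ⟨?_, ?_⟩⟩
  · intro b; exact ite_nonneg zero_le_one le_rfl
  · simp

lemma pay_abs_le (w : K × C × D → ℝ) (g : K → I → J → ℝ) (hg : Bounded1 g)
    {σ : C → I → ℝ} {τ : D → J → ℝ} (hσ : IsKernel σ) (hτ : IsKernel τ) :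
    |pay w g σ τ| ≤ ∑ x, |w x| := by
  have key : ∀ k c d, |∑ i, ∑ j, w (k, c, d) * σ c i * τ d j * g k i j| ≤ |w (k, c, d)| := by
    intro k c d
    have h1 : |∑ i, ∑ j, w (k, c, d) * σ c i * τ d j * g k i j|
        ≤ ∑ i, ∑ j, |w (k, c, d)| * σ c i * τ d j := by
      refine (Finset.abs_sum_le_sum_abs _ _).trans (Finset.sum_le_sum fun i _ => ?_)
      refine (Finset.abs_sum_le_sum_abs _ _).trans (Finset.sum_le_sum fun j _ => ?_)
      rw [abs_mul, abs_mul, abs_mul, abs_of_nonneg ((hσ c).1 i), abs_of_nonneg ((hτ d).1 j)]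
      have h0 : 0 ≤ |w (k, c, d)| * σ c i * τ d j := by
        exact mul_nonneg (mul_nonneg (abs_nonneg _) ((hσ c).1 i)) ((hτ d).1 j)
      calc |w (k, c, d)| * σ c i * τ d j * |g k i j|
          ≤ |w (k, c, d)| * σ c i * τ d j * 1 := by
            exact mul_le_mul_of_nonneg_left (hg k i j) h0
        _ = |w (k, c, d)| * σ c i * τ d j := by ring
    have h2 : ∑ i, ∑ j, |w (k, c, d)| * σ c i * τ d j = |w (k, c, d)| := by
      have hin : ∀ i, ∑ j, |w (k, c, d)| * σ c i * τ d j = |w (k, c, d)| * σ c i := by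
        intro i; rw [← Finset.mul_sum, (hτ d).2, mul_one]
      simp only [hin]
      rw [← Finset.mul_sum, (hσ c).2, mul_one]
    exact h1.trans_eq h2
  calc |pay w g σ τ|
      ≤ ∑ k, ∑ c, ∑ d, |∑ i, ∑ j, w (k, c, d) * σ c i * τ d j * g k i j| := by
        refine (Finset.abs_sum_le_sum_abs _ _).trans (Finset.sum_le_sum fun k _ => ?_)
        exact (Finset.abs_sum_le_sum_abs _ _).trans
          (Finset.sum_le_sum fun c _ => Finset.abs_sum_le_sum_abs _ _)
    _ ≤ ∑ k, ∑ c, ∑ d, |w (k, c, d)| := by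
        refine Finset.sum_le_sum fun k _ => Finset.sum_le_sum fun c _ =>
          Finset.sum_le_sum fun d _ => key k c d
    _ = ∑ x, |w x| := by rw [Fintype.sum_prod_type]; simp [Fintype.sum_prod_type]

lemma pay_diff_le (u v : K × C × D → ℝ) (g : K → I → J → ℝ) (hg : Bounded1 g)
    {σ : C → I → ℝ} {τ : D → J → ℝ} (hσ : IsKernel σ) (hτ : IsKernel τ) :
    |pay u g σ τ - pay v g σ τ| ≤ l1 u v := by
  have h : pay u g σ τ - pay v g σ τ = pay (fun x => u x - v x) g σ τ := by
    simp [pay, sub_mul, Finset.sum_sub_distrib]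
  rw [h]
  exact pay_abs_le _ g hg hσ hτ

lemma pay_abs_le_one (u : K × C × D → ℝ) (hu : IsDist u) (g : K → I → J → ℝ) (hg : Bounded1 g)
    {σ : C → I → ℝ} {τ : D → J → ℝ} (hσ : IsKernel σ) (hτ : IsKernel τ) :
    |pay u g σ τ| ≤ 1 := by
  refine (pay_abs_le u g hg hσ hτ).trans_eq ?_
  rw [← hu.2]
  exact Finset.sum_congr rfl fun x _ => abs_of_nonneg (hu.1 x)

lemma gameVal_le_gameVal_add [Nonempty I] [Nonempty J]
    (u v : K × C × D → ℝ) (hu : IsDist u) (hv : IsDist v)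
    (g : K → I → J → ℝ) (hg : Bounded1 g) :
    gameVal u g ≤ gameVal v g + l1 u v := by
  obtain ⟨σ₀, hσ₀⟩ := kernel_exists (α := C) (β := I)
  obtain ⟨τ₀, hτ₀⟩ := kernel_exists (α := D) (β := J)
  have Tne : ∀ (w : K × C × D → ℝ) (σ : C → I → ℝ),
      ({y : ℝ | ∃ τ : D → J → ℝ, IsKernel τ ∧ y = pay w g σ τ}).Nonempty :=
    fun w σ => ⟨pay w g σ τ₀, τ₀, hτ₀, rfl⟩
  have Tbdd : ∀ (w : K × C × D → ℝ), IsDist w → ∀ σ, IsKernel σ →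
      BddBelow {y : ℝ | ∃ τ : D → J → ℝ, IsKernel τ ∧ y = pay w g σ τ} := by
    intro w hw σ hσ
    refine ⟨-1, fun y hy => ?_⟩
    obtain ⟨τ, hτ, rfl⟩ := hy
    linarith [(abs_le.mp (pay_abs_le_one w hw g hg hσ hτ)).1]
  have Tup : ∀ (w : K × C × D → ℝ), IsDist w → ∀ σ, IsKernel σ →
      sInf {y : ℝ | ∃ τ : D → J → ℝ, IsKernel τ ∧ y = pay w g σ τ} ≤ 1 := by
    intro w hw σ hσ
    refine (csInf_le (Tbdd w hw σ hσ) ⟨τ₀, hτ₀, rfl⟩).trans ?_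
    exact (abs_le.mp (pay_abs_le_one w hw g hg hσ hτ₀)).2
  unfold gameVal
  refine csSup_le ⟨_, σ₀, hσ₀, rfl⟩ ?_
  rintro x ⟨σ, hσ, rfl⟩
  have key : sInf {y : ℝ | ∃ τ : D → J → ℝ, IsKernel τ ∧ y = pay u g σ τ} - l1 u v
      ≤ sInf {y : ℝ | ∃ τ : D → J → ℝ, IsKernel τ ∧ y = pay v g σ τ} := by
    refine le_csInf (Tne v σ) ?_
    rintro y ⟨τ, hτ, rfl⟩
    have h1 := csInf_le (Tbdd u hu σ hσ) (⟨τ, hτ, rfl⟩ :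
      pay u g σ τ ∈ {y : ℝ | ∃ τ : D → J → ℝ, IsKernel τ ∧ y = pay u g σ τ})
    have h2 := (abs_le.mp (pay_diff_le u v g hg hσ hτ)).2
    linarith
  have hmem : sInf {y : ℝ | ∃ τ : D → J → ℝ, IsKernel τ ∧ y = pay v g σ τ}
      ∈ {x : ℝ | ∃ σ' : C → I → ℝ, IsKernel σ' ∧
        x = sInf {y : ℝ | ∃ τ : D → J → ℝ, IsKernel τ ∧ y = pay v g σ' τ}} := ⟨σ, hσ, rfl⟩
  have hle := le_csSup (s := {x : ℝ | ∃ σ' : C → I → ℝ, IsKernel σ' ∧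
      x = sInf {y : ℝ | ∃ τ : D → J → ℝ, IsKernel τ ∧ y = pay v g σ' τ}})
    ⟨1, by rintro x ⟨σ', hσ', rfl⟩; exact Tup v hv σ' hσ'⟩ hmem
  linarith

end helpers

theorem stmt0 {K C D I J : Type*} [Fintype K] [Fintype C] [Fintype D]
    [Fintype I] [Nonempty I] [Fintype J] [Nonempty J]
    (u v : K × C × D → ℝ) (hu : IsDist u) (hv : IsDist v)
    (g : K → I → J → ℝ) (hg : Bounded1 g) :
    |gameVal u g - gameVal v g| ≤ l1 u v := by
  have h1 := gameVal_le_gameVal_add u v hu hv g hg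
  have h2 := gameVal_le_gameVal_add v u hv hu g hg
  have hl : l1 v u = l1 u v := by
    unfold l1; exact Finset.sum_congr rfl fun x _ => abs_sub_comm _ _
  rw [hl] at h2
  rw [abs_sub_le_iff]
  constructor <;> linarith
end

section
/- For any garbling q₂ on player 2's signals and any payoff function g, val(v.q₂, g) ≥ val(v, g); and for any garbling q₁ on player 1's signals, val(u, g) ≥ val(q₁.u, g). That is, the value of a zero-sum Bayesian game is weakly decreasing when player 1's information is garbled and weakly increasing when player 2's information is garbled. -/
open scoped BigOperators

section auxStmt3
open Finset
variable {K C D I J : Type*} [Fintype K] [Fintype C] [Fintype D] [Fintype I] [Fintype J]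

lemma stmt3_uniform_kernel [Nonempty I] :
    IsKernel (fun (_ : C) (_ : I) => (Fintype.card I : ℝ)⁻¹) := by
  intro c
  constructor
  · intro i; positivity
  · rw [Finset.sum_const, Finset.card_univ, nsmul_eq_mul, mul_inv_cancel₀]
    exact_mod_cast (Fintype.card_ne_zero : Fintype.card I ≠ 0)

lemma stmt3_mix_kernel {q : C → C → ℝ} {σ : C → I → ℝ} (hq : IsKernel q) (hσ : IsKernel σ) :
    IsKernel (fun c i => ∑ c', q c c' * σ c' i) := by
  intro c
  constructor
  · intro i
    exact Finset.sum_nonneg fun c' _ => mul_nonneg ((hq c).1 c') ((hσ c').1 i)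
  · rw [Finset.sum_comm]
    calc ∑ c', ∑ i, q c c' * σ c' i = ∑ c', q c c' * ∑ i, σ c' i := by
          simp [Finset.mul_sum]
      _ = ∑ c', q c c' := by simp [fun c' => (hσ c').2]
      _ = 1 := (hq c).2

lemma stmt3_sum_weights {u : K × C × D → ℝ} {σ : C → I → ℝ} {τ : D → J → ℝ}
    (hu : IsDist u) (hσ : IsKernel σ) (hτ : IsKernel τ) :
    ∑ k, ∑ c, ∑ d, ∑ i, ∑ j, u (k, c, d) * σ c i * τ d j = 1 := by
  have h1 : ∀ k c d, (∑ i, ∑ j, u (k, c, d) * σ c i * τ d j) = u (k, c, d) := by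
    intro k c d
    have : ∀ i, ∑ j, u (k, c, d) * σ c i * τ d j = u (k, c, d) * σ c i := by
      intro i
      rw [← Finset.mul_sum, (hτ d).2, mul_one]
    simp only [this, ← Finset.mul_sum, (hσ c).2, mul_one]
  simp only [h1]
  have h2 : ∑ a : K × C × D, u a = ∑ k, ∑ c, ∑ d, u (k, c, d) := by
    rw [Fintype.sum_prod_type]
    exact Finset.sum_congr rfl fun k _ => by rw [Fintype.sum_prod_type]
  rw [← h2]; exact hu.2

lemma stmt3_pay_le_one {u : K × C × D → ℝ} {g : K → I → J → ℝ} {σ : C → I → ℝ} {τ : D → J → ℝ}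
    (hu : IsDist u) (hσ : IsKernel σ) (hτ : IsKernel τ) (hg : Bounded1 g) :
    pay u g σ τ ≤ 1 := by
  rw [← stmt3_sum_weights hu hσ hτ]
  refine Finset.sum_le_sum fun k _ => Finset.sum_le_sum fun c _ => Finset.sum_le_sum fun d _ =>
    Finset.sum_le_sum fun i _ => Finset.sum_le_sum fun j _ => ?_
  have h0 : 0 ≤ u (k, c, d) * σ c i * τ d j :=
    mul_nonneg (mul_nonneg (hu.1 _) ((hσ c).1 i)) ((hτ d).1 j)
  calc u (k, c, d) * σ c i * τ d j * g k i j
      ≤ |u (k, c, d) * σ c i * τ d j * g k i j| := le_abs_self _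
    _ = (u (k, c, d) * σ c i * τ d j) * |g k i j| := by rw [abs_mul, abs_of_nonneg h0]
    _ ≤ (u (k, c, d) * σ c i * τ d j) * 1 := mul_le_mul_of_nonneg_left (hg k i j) h0
    _ = _ := mul_one _

lemma stmt3_neg_one_le_pay {u : K × C × D → ℝ} {g : K → I → J → ℝ} {σ : C → I → ℝ}
    {τ : D → J → ℝ}
    (hu : IsDist u) (hσ : IsKernel σ) (hτ : IsKernel τ) (hg : Bounded1 g) :
    -1 ≤ pay u g σ τ := by
  have h := stmt3_pay_le_one (g := fun k i j => -(g k i j)) hu hσ hτ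
    (by intro k i j; simpa using hg k i j)
  have heq : pay u (fun k i j => -(g k i j)) σ τ = -pay u g σ τ := by
    simp [pay, ← Finset.sum_neg_distrib]
  rw [heq] at h
  linarith

lemma stmt3_pay_garbleL {u : K × C × D → ℝ} {g : K → I → J → ℝ} (q : C → C → ℝ)
    (σ : C → I → ℝ) (τ : D → J → ℝ) :
    pay (garbleL q u) g σ τ = pay u g (fun c i => ∑ c', q c c' * σ c' i) τ := by
  show (∑ k, ∑ c, ∑ d, ∑ i, ∑ j, (∑ c₀, u (k, c₀, d) * q c₀ c) * σ c i * τ d j * g k i j)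
    = ∑ k, ∑ c, ∑ d, ∑ i, ∑ j, u (k, c, d) * (∑ c', q c c' * σ c' i) * τ d j * g k i j
  simp only [Finset.sum_mul, Finset.mul_sum]
  conv_lhs => enter [2, k, 2, c, 2, d, 2, i]; rw [Finset.sum_comm]
  conv_lhs => enter [2, k, 2, c, 2, d]; rw [Finset.sum_comm]
  conv_lhs => enter [2, k, 2, c]; rw [Finset.sum_comm]
  conv_lhs => enter [2, k]; rw [Finset.sum_comm]
  conv_rhs => enter [2, k, 2, c, 2, d, 2, i]; rw [Finset.sum_comm]
  conv_rhs => enter [2, k, 2, c, 2, d]; rw [Finset.sum_comm]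
  conv_rhs => enter [2, k, 2, c]; rw [Finset.sum_comm]
  refine Finset.sum_congr rfl fun k _ => Finset.sum_congr rfl fun a _ => Finset.sum_congr rfl
    fun b _ => Finset.sum_congr rfl fun d _ => Finset.sum_congr rfl fun i _ =>
    Finset.sum_congr rfl fun j _ => ?_
  ring

lemma stmt3_pay_garbleR {v : K × C × D → ℝ} {g : K → I → J → ℝ} (q : D → D → ℝ)
    (σ : C → I → ℝ) (τ : D → J → ℝ) :
    pay (garbleR q v) g σ τ = pay v g σ (fun d j => ∑ d', q d d' * τ d' j) := by
  show (∑ k, ∑ c, ∑ d, ∑ i, ∑ j, (∑ d₀, v (k, c, d₀) * q d₀ d) * σ c i * τ d j * g k i j)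
    = ∑ k, ∑ c, ∑ d, ∑ i, ∑ j, v (k, c, d) * σ c i * (∑ d', q d d' * τ d' j) * g k i j
  simp only [Finset.sum_mul, Finset.mul_sum]
  conv_lhs => enter [2, k, 2, c, 2, d, 2, i]; rw [Finset.sum_comm]
  conv_lhs => enter [2, k, 2, c, 2, d]; rw [Finset.sum_comm]
  conv_lhs => enter [2, k, 2, c]; rw [Finset.sum_comm]
  conv_rhs => enter [2, k, 2, c, 2, d, 2, i]; rw [Finset.sum_comm]
  conv_rhs => enter [2, k, 2, c, 2, d]; rw [Finset.sum_comm]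
  refine Finset.sum_congr rfl fun k _ => Finset.sum_congr rfl fun c _ => Finset.sum_congr rfl
    fun a _ => Finset.sum_congr rfl fun b _ => Finset.sum_congr rfl fun i _ =>
    Finset.sum_congr rfl fun j _ => ?_
  ring

lemma stmt3_isDist_garbleL {u : K × C × D → ℝ} {q : C → C → ℝ}
    (hu : IsDist u) (hq : IsKernel q) : IsDist (garbleL q u) := by
  constructor
  · intro a
    exact Finset.sum_nonneg fun c _ => mul_nonneg (hu.1 _) ((hq c).1 _)
  · have h0 : ∑ a : K × C × D, garbleL q u a
        = ∑ k, ∑ c', ∑ d, ∑ c, u (k, c, d) * q c c' := by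
      rw [Fintype.sum_prod_type]
      exact Finset.sum_congr rfl fun k _ => by rw [Fintype.sum_prod_type]; rfl
    rw [h0]
    have h2 : ∀ k, ∑ c', ∑ d, ∑ c, u (k, c, d) * q c c' = ∑ d, ∑ c, u (k, c, d) := by
      intro k
      rw [Finset.sum_comm]
      refine Finset.sum_congr rfl fun d _ => ?_
      rw [Finset.sum_comm]
      refine Finset.sum_congr rfl fun c _ => ?_
      rw [← Finset.mul_sum, (hq c).2, mul_one]
    simp only [h2]
    have h3 : ∑ a : K × C × D, u a = ∑ k, ∑ d, ∑ c, u (k, c, d) := by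
      rw [Fintype.sum_prod_type]
      refine Finset.sum_congr rfl fun k _ => ?_
      rw [Fintype.sum_prod_type, Finset.sum_comm]
    rw [← h3]; exact hu.2

lemma stmt3_isDist_garbleR {v : K × C × D → ℝ} {q : D → D → ℝ}
    (hv : IsDist v) (hq : IsKernel q) : IsDist (garbleR q v) := by
  constructor
  · intro a
    exact Finset.sum_nonneg fun d _ => mul_nonneg (hv.1 _) ((hq d).1 _)
  · have h0 : ∑ a : K × C × D, garbleR q v a
        = ∑ k, ∑ c, ∑ d', ∑ d, v (k, c, d) * q d d' := by
      rw [Fintype.sum_prod_type]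
      exact Finset.sum_congr rfl fun k _ => by rw [Fintype.sum_prod_type]; rfl
    rw [h0]
    have h2 : ∀ k c, ∑ d', ∑ d, v (k, c, d) * q d d' = ∑ d, v (k, c, d) := by
      intro k c
      rw [Finset.sum_comm]
      refine Finset.sum_congr rfl fun d _ => ?_
      rw [← Finset.mul_sum, (hq d).2, mul_one]
    simp only [h2]
    have h3 : ∑ a : K × C × D, v a = ∑ k, ∑ c, ∑ d, v (k, c, d) := by
      rw [Fintype.sum_prod_type]
      exact Finset.sum_congr rfl fun k _ => by rw [Fintype.sum_prod_type]
    rw [← h3]; exact hv.2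

variable [Nonempty I] [Nonempty J]

lemma stmt3_inner_nonempty (w : K × C × D → ℝ) (g : K → I → J → ℝ) (σ : C → I → ℝ) :
    {y : ℝ | ∃ τ : D → J → ℝ, IsKernel τ ∧ y = pay w g σ τ}.Nonempty :=
  ⟨_, fun _ _ => (Fintype.card J : ℝ)⁻¹, stmt3_uniform_kernel, rfl⟩

lemma stmt3_inner_bddBelow {w : K × C × D → ℝ} {g : K → I → J → ℝ} {σ : C → I → ℝ}
    (hw : IsDist w) (hσ : IsKernel σ) (hg : Bounded1 g) :
    BddBelow {y : ℝ | ∃ τ : D → J → ℝ, IsKernel τ ∧ y = pay w g σ τ} := by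
  refine ⟨-1, ?_⟩
  rintro y ⟨τ, hτ, rfl⟩
  exact stmt3_neg_one_le_pay hw hσ hτ hg

lemma stmt3_outer_nonempty (w : K × C × D → ℝ) (g : K → I → J → ℝ) :
    {x : ℝ | ∃ σ : C → I → ℝ, IsKernel σ ∧
      x = sInf {y : ℝ | ∃ τ : D → J → ℝ, IsKernel τ ∧ y = pay w g σ τ}}.Nonempty :=
  ⟨_, fun _ _ => (Fintype.card I : ℝ)⁻¹, stmt3_uniform_kernel, rfl⟩

lemma stmt3_outer_bddAbove {w : K × C × D → ℝ} {g : K → I → J → ℝ}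
    (hw : IsDist w) (hg : Bounded1 g) :
    BddAbove {x : ℝ | ∃ σ : C → I → ℝ, IsKernel σ ∧
      x = sInf {y : ℝ | ∃ τ : D → J → ℝ, IsKernel τ ∧ y = pay w g σ τ}} := by
  refine ⟨1, ?_⟩
  rintro x ⟨σ, hσ, rfl⟩
  refine csInf_le_of_le (stmt3_inner_bddBelow hw hσ hg)
    (⟨fun _ _ => (Fintype.card J : ℝ)⁻¹, stmt3_uniform_kernel, rfl⟩) ?_
  exact stmt3_pay_le_one hw hσ stmt3_uniform_kernel hg

end auxStmt3

theorem stmt3 {K C D I J : Type*} [Fintype K] [Fintype C] [Fintype D]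
    [Fintype I] [Nonempty I] [Fintype J] [Nonempty J]
    (u v : K × C × D → ℝ) (hu : IsDist u) (hv : IsDist v)
    (q₁ : C → C → ℝ) (q₂ : D → D → ℝ) (hq₁ : IsKernel q₁) (hq₂ : IsKernel q₂)
    (g : K → I → J → ℝ) (hg : Bounded1 g) :
    gameVal v g ≤ gameVal (garbleR q₂ v) g ∧ gameVal (garbleL q₁ u) g ≤ gameVal u g := by
  have hvq : IsDist (garbleR q₂ v) := stmt3_isDist_garbleR hv hq₂
  have huq : IsDist (garbleL q₁ u) := stmt3_isDist_garbleL hu hq₁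
  constructor
  · -- garbling player 2 raises the value
    refine csSup_le (stmt3_outer_nonempty v g) ?_
    rintro x ⟨σ, hσ, rfl⟩
    have hsub : {y : ℝ | ∃ τ : D → J → ℝ, IsKernel τ ∧ y = pay (garbleR q₂ v) g σ τ}
        ⊆ {y : ℝ | ∃ τ : D → J → ℝ, IsKernel τ ∧ y = pay v g σ τ} := by
      rintro y ⟨τ, hτ, rfl⟩
      exact ⟨fun d j => ∑ d', q₂ d d' * τ d' j, stmt3_mix_kernel hq₂ hτ,
        (stmt3_pay_garbleR q₂ σ τ)⟩
    have h1 : sInf {y : ℝ | ∃ τ : D → J → ℝ, IsKernel τ ∧ y = pay v g σ τ}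
        ≤ sInf {y : ℝ | ∃ τ : D → J → ℝ, IsKernel τ ∧ y = pay (garbleR q₂ v) g σ τ} :=
      csInf_le_csInf (stmt3_inner_bddBelow hv hσ hg)
        (stmt3_inner_nonempty (garbleR q₂ v) g σ) hsub
    refine le_trans h1 (le_csSup (stmt3_outer_bddAbove hvq hg) ⟨σ, hσ, rfl⟩)
  · -- garbling player 1 lowers the value
    refine csSup_le (stmt3_outer_nonempty (garbleL q₁ u) g) ?_
    rintro x ⟨σ, hσ, rfl⟩
    have hset : {y : ℝ | ∃ τ : D → J → ℝ, IsKernel τ ∧ y = pay (garbleL q₁ u) g σ τ}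
        = {y : ℝ | ∃ τ : D → J → ℝ, IsKernel τ ∧
            y = pay u g (fun c i => ∑ c', q₁ c c' * σ c' i) τ} := by
      ext y
      constructor
      · rintro ⟨τ, hτ, rfl⟩
        exact ⟨τ, hτ, stmt3_pay_garbleL q₁ σ τ⟩
      · rintro ⟨τ, hτ, rfl⟩
        exact ⟨τ, hτ, (stmt3_pay_garbleL q₁ σ τ).symm⟩
    rw [hset]
    exact le_csSup (stmt3_outer_bddAbove hu hg)
      ⟨fun c i => ∑ c', q₁ c c' * σ c' i, stmt3_mix_kernel hq₁ hσ, rfl⟩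
end

section
/- Let p, q ∈ Δ(K) and let u, v be finite information structures with marg_K u = p and marg_K v = q. Then d(u,v) ≤ 2(1 - max_{p',q' ∈ Δ(K)} Σ_k min(p_k q'_k, p'_k q_k)). In particular, if p = q, then d(u,v) ≤ 2(1 - max_k p_k). -/
open scoped BigOperators

section Aux

lemma unif_kernel {α β : Type*} [Fintype β] [Nonempty β] :
    IsKernel (fun (_ : α) (_ : β) => (Fintype.card β : ℝ)⁻¹) := by
  intro a
  constructor
  · intro b; positivity
  · rw [Finset.sum_const, Finset.card_univ, nsmul_eq_mul]
    exact mul_inv_cancel₀ (Nat.cast_ne_zero.mpr Fintype.card_ne_zero)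

lemma abs_pay_le {K C D I J : Type*} [Fintype K] [Fintype C] [Fintype D] [Fintype I] [Fintype J]
    {u : K × C × D → ℝ} {g : K → I → J → ℝ} {σ : C → I → ℝ} {τ : D → J → ℝ}
    (hu : IsDist u) (hσ : IsKernel σ) (hτ : IsKernel τ) (hg : Bounded1 g) :
    |pay u g σ τ| ≤ 1 := by
  have key : ∀ (c : C) (d : D) (x : ℝ), (∑ i, ∑ j, x * σ c i * τ d j) = x := by
    intro c d x
    have h1 : ∀ i, (∑ j, x * σ c i * τ d j) = x * σ c i := fun i => by
      rw [← Finset.mul_sum, (hτ d).2, mul_one]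
    simp only [h1]
    rw [← Finset.mul_sum, (hσ c).2, mul_one]
  have h2 : (∑ k, ∑ c, ∑ d, ∑ i, ∑ j, u (k,c,d) * σ c i * τ d j) = 1 := by
    have h3 : ∀ (k : K) (c : C) (d : D), (∑ i, ∑ j, u (k,c,d) * σ c i * τ d j) = u (k,c,d) :=
      fun k c d => key c d _
    simp only [h3]
    have := hu.2
    simp only [Fintype.sum_prod_type] at this
    exact this
  have h1 : |pay u g σ τ| ≤ ∑ k, ∑ c, ∑ d, ∑ i, ∑ j, u (k,c,d) * σ c i * τ d j := by
    refine (Finset.abs_sum_le_sum_abs _ _).trans (Finset.sum_le_sum fun k _ => ?_)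
    refine (Finset.abs_sum_le_sum_abs _ _).trans (Finset.sum_le_sum fun c _ => ?_)
    refine (Finset.abs_sum_le_sum_abs _ _).trans (Finset.sum_le_sum fun d _ => ?_)
    refine (Finset.abs_sum_le_sum_abs _ _).trans (Finset.sum_le_sum fun i _ => ?_)
    refine (Finset.abs_sum_le_sum_abs _ _).trans (Finset.sum_le_sum fun j _ => ?_)
    have h0 : 0 ≤ u (k,c,d) * σ c i * τ d j :=
      mul_nonneg (mul_nonneg (hu.1 _) ((hσ c).1 i)) ((hτ d).1 j)
    rw [abs_mul, abs_of_nonneg h0]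
    exact mul_le_of_le_one_right h0 (hg k i j)
  linarith

lemma mix_kernel {K C I : Type*} [Fintype K] [Fintype C] [Fintype I]
    {w : K → ℝ} {r : K → C → ℝ} {σ : C → I → ℝ}
    (hw : IsDist w) (hr : ∀ k, IsDist (r k)) (hσ : IsKernel σ) :
    IsDist (fun i => ∑ k, w k * ∑ c, r k c * σ c i) := by
  constructor
  · intro i
    exact Finset.sum_nonneg fun k _ => mul_nonneg (hw.1 k)
      (Finset.sum_nonneg fun c _ => mul_nonneg ((hr k).1 c) ((hσ c).1 i))
  · rw [Finset.sum_comm]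
    have h1 : ∀ k, (∑ i, w k * ∑ c, r k c * σ c i) = w k := by
      intro k
      rw [← Finset.mul_sum]
      rw [Finset.sum_comm]
      have h2 : ∀ c, (∑ i, r k c * σ c i) = r k c := fun c => by
        rw [← Finset.mul_sum, (hσ c).2, mul_one]
      simp only [h2, (hr k).2, mul_one]
    simp only [h1, hw.2]

end Aux

section Perm

lemma perm_left {A B C D E : Type*} [Fintype A] [Fintype B] [Fintype C] [Fintype D] [Fintype E]
    (N : A → B → C → D → E → ℝ) :
    (∑ a, ∑ b, ∑ c, ∑ d, ∑ e, N a b c d e) = ∑ d, ∑ a, ∑ b, ∑ c, ∑ e, N a b c d e := by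
  calc (∑ a, ∑ b, ∑ c, ∑ d, ∑ e, N a b c d e)
      = ∑ a, ∑ b, ∑ d, ∑ c, ∑ e, N a b c d e :=
        Finset.sum_congr rfl fun a _ => Finset.sum_congr rfl fun b _ => Finset.sum_comm
    _ = ∑ a, ∑ d, ∑ b, ∑ c, ∑ e, N a b c d e :=
        Finset.sum_congr rfl fun a _ => Finset.sum_comm
    _ = ∑ d, ∑ a, ∑ b, ∑ c, ∑ e, N a b c d e := Finset.sum_comm

lemma perm_right {A B C D E : Type*} [Fintype A] [Fintype B] [Fintype C] [Fintype D] [Fintype E]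
    (N : A → B → C → D → E → ℝ) :
    (∑ a, ∑ b, ∑ c, ∑ d, ∑ e, N a b c d e) = ∑ d, ∑ e, ∑ b, ∑ c, ∑ a, N a b c d e := by
  calc (∑ a, ∑ b, ∑ c, ∑ d, ∑ e, N a b c d e)
      = ∑ d, ∑ a, ∑ b, ∑ c, ∑ e, N a b c d e := perm_left N
    _ = ∑ d, ∑ a, ∑ b, ∑ e, ∑ c, N a b c d e :=
        Finset.sum_congr rfl fun d _ => Finset.sum_congr rfl fun a _ =>
          Finset.sum_congr rfl fun b _ => Finset.sum_comm
    _ = ∑ d, ∑ a, ∑ e, ∑ b, ∑ c, N a b c d e :=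
        Finset.sum_congr rfl fun d _ => Finset.sum_congr rfl fun a _ => Finset.sum_comm
    _ = ∑ d, ∑ e, ∑ a, ∑ b, ∑ c, N a b c d e :=
        Finset.sum_congr rfl fun d _ => Finset.sum_comm
    _ = ∑ d, ∑ e, ∑ a, ∑ b, ∑ c, N a b c d e := rfl
    _ = ∑ d, ∑ e, ∑ b, ∑ a, ∑ c, N a b c d e :=
        Finset.sum_congr rfl fun d _ => Finset.sum_congr rfl fun e _ => Finset.sum_comm
    _ = ∑ d, ∑ e, ∑ b, ∑ c, ∑ a, N a b c d e :=
        Finset.sum_congr rfl fun d _ => Finset.sum_congr rfl fun e _ =>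
          Finset.sum_congr rfl fun b _ => Finset.sum_comm

end Perm

section PayId

variable {K C D C' D' I J : Type*} [Fintype K] [Fintype C] [Fintype D] [Fintype C'] [Fintype D']
  [Fintype I] [Fintype J]

lemma pay_left (u : K × C × D → ℝ) (g : K → I → J → ℝ) (σ : C → I → ℝ) (τ' : D' → J → ℝ)
    (p q' : K → ℝ) (r : K → C → ℝ) (s : K → D' → ℝ)
    (hur : ∀ k c, (∑ d, u (k, c, d)) = p k * r k c) :
    pay u g σ (fun _ j => ∑ k2, q' k2 * ∑ d', s k2 d' * τ' d' j) =
      ∑ k, ∑ k2, p k * q' k2 *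
        (∑ c, ∑ i, ∑ j, ∑ d', r k c * s k2 d' * σ c i * τ' d' j * g k i j) := by
  unfold pay
  refine Finset.sum_congr rfl fun k _ => ?_
  calc (∑ c, ∑ d, ∑ i, ∑ j,
          u (k, c, d) * σ c i * (∑ k2, q' k2 * ∑ d', s k2 d' * τ' d' j) * g k i j)
      = ∑ c, (∑ d, u (k, c, d)) *
          (∑ i, ∑ j, σ c i * (∑ k2, q' k2 * ∑ d', s k2 d' * τ' d' j) * g k i j) := by
        refine Finset.sum_congr rfl fun c _ => ?_
        rw [Finset.sum_mul]
        refine Finset.sum_congr rfl fun d _ => ?_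
        rw [Finset.mul_sum]
        refine Finset.sum_congr rfl fun i _ => ?_
        rw [Finset.mul_sum]
        exact Finset.sum_congr rfl fun j _ => by ring
    _ = ∑ c, ∑ i, ∑ j, ∑ k2, ∑ d',
          p k * q' k2 * r k c * s k2 d' * σ c i * τ' d' j * g k i j := by
        refine Finset.sum_congr rfl fun c _ => ?_
        rw [hur k c, Finset.mul_sum]
        refine Finset.sum_congr rfl fun i _ => ?_
        rw [Finset.mul_sum]
        refine Finset.sum_congr rfl fun j _ => ?_
        simp only [Finset.mul_sum, Finset.sum_mul]
        refine Finset.sum_congr rfl fun k2 _ => ?_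
        refine Finset.sum_congr rfl fun d' _ => by ring
    _ = ∑ k2, ∑ c, ∑ i, ∑ j, ∑ d',
          p k * q' k2 * r k c * s k2 d' * σ c i * τ' d' j * g k i j :=
        perm_left _
    _ = ∑ k2, p k * q' k2 *
          (∑ c, ∑ i, ∑ j, ∑ d', r k c * s k2 d' * σ c i * τ' d' j * g k i j) := by
        refine Finset.sum_congr rfl fun k2 _ => ?_
        rw [Finset.mul_sum]
        refine Finset.sum_congr rfl fun c _ => ?_
        rw [Finset.mul_sum]
        refine Finset.sum_congr rfl fun i _ => ?_
        rw [Finset.mul_sum]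
        refine Finset.sum_congr rfl fun j _ => ?_
        rw [Finset.mul_sum]
        refine Finset.sum_congr rfl fun d' _ => by ring

lemma pay_right (v : K × C' × D' → ℝ) (g : K → I → J → ℝ) (σ : C → I → ℝ) (τ' : D' → J → ℝ)
    (q p' : K → ℝ) (r : K → C → ℝ) (s : K → D' → ℝ)
    (hvs : ∀ k d', (∑ c', v (k, c', d')) = q k * s k d') :
    pay v g (fun _ i => ∑ k2, p' k2 * ∑ c, r k2 c * σ c i) τ' =
      ∑ k, ∑ k2, q k * p' k2 *
        (∑ c, ∑ i, ∑ j, ∑ d', r k2 c * s k d' * σ c i * τ' d' j * g k i j) := by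
  unfold pay
  refine Finset.sum_congr rfl fun k _ => ?_
  calc (∑ c', ∑ d', ∑ i, ∑ j,
          v (k, c', d') * (∑ k2, p' k2 * ∑ c, r k2 c * σ c i) * τ' d' j * g k i j)
      = ∑ d', ∑ c', ∑ i, ∑ j,
          v (k, c', d') * (∑ k2, p' k2 * ∑ c, r k2 c * σ c i) * τ' d' j * g k i j :=
        Finset.sum_comm
    _ = ∑ d', (∑ c', v (k, c', d')) *
          (∑ i, ∑ j, (∑ k2, p' k2 * ∑ c, r k2 c * σ c i) * τ' d' j * g k i j) := by
        refine Finset.sum_congr rfl fun d' _ => ?_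
        rw [Finset.sum_mul]
        refine Finset.sum_congr rfl fun c' _ => ?_
        conv_rhs => rw [Finset.mul_sum]
        refine Finset.sum_congr rfl fun i _ => ?_
        conv_rhs => rw [Finset.mul_sum]
        exact Finset.sum_congr rfl fun j _ => by ring
    _ = ∑ d', ∑ i, ∑ j, ∑ k2, ∑ c,
          q k * p' k2 * r k2 c * s k d' * σ c i * τ' d' j * g k i j := by
        refine Finset.sum_congr rfl fun d' _ => ?_
        rw [hvs k d', Finset.mul_sum]
        refine Finset.sum_congr rfl fun i _ => ?_
        rw [Finset.mul_sum]
        refine Finset.sum_congr rfl fun j _ => ?_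
        simp only [Finset.mul_sum, Finset.sum_mul]
        refine Finset.sum_congr rfl fun k2 _ => ?_
        refine Finset.sum_congr rfl fun c _ => by ring
    _ = ∑ k2, ∑ c, ∑ i, ∑ j, ∑ d',
          q k * p' k2 * r k2 c * s k d' * σ c i * τ' d' j * g k i j :=
        perm_right _
    _ = ∑ k2, q k * p' k2 *
          (∑ c, ∑ i, ∑ j, ∑ d', r k2 c * s k d' * σ c i * τ' d' j * g k i j) := by
        refine Finset.sum_congr rfl fun k2 _ => ?_
        rw [Finset.mul_sum]
        refine Finset.sum_congr rfl fun c _ => ?_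
        rw [Finset.mul_sum]
        refine Finset.sum_congr rfl fun i _ => ?_
        rw [Finset.mul_sum]
        refine Finset.sum_congr rfl fun j _ => ?_
        rw [Finset.mul_sum]
        refine Finset.sum_congr rfl fun d' _ => by ring

end PayId

section Key

variable {K C D C' D' I J : Type*} [Fintype K] [Fintype C] [Fintype D] [Fintype C'] [Fintype D']
  [Fintype I] [Fintype J]

lemma key_ineq (u : K × C × D → ℝ) (v : K × C' × D' → ℝ) (g : K → I → J → ℝ) (hg : Bounded1 g)
    (p q p' q' : K → ℝ) (r : K → C → ℝ) (s : K → D' → ℝ)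
    (hp0 : ∀ k, 0 ≤ p k) (hq0 : ∀ k, 0 ≤ q k)
    (hpsum : ∑ k, p k = 1) (hqsum : ∑ k, q k = 1)
    (hp' : IsDist p') (hq' : IsDist q')
    (hr : ∀ k, IsDist (r k)) (hs : ∀ k, IsDist (s k))
    (hur : ∀ k c, (∑ d, u (k, c, d)) = p k * r k c)
    (hvs : ∀ k d', (∑ c', v (k, c', d')) = q k * s k d')
    (σ : C → I → ℝ) (τ' : D' → J → ℝ) (hσ : IsKernel σ) (hτ' : IsKernel τ') :
    pay u g σ (fun _ j => ∑ k2, q' k2 * ∑ d', s k2 d' * τ' d' j) ≤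
      pay v g (fun _ i => ∑ k2, p' k2 * ∑ c, r k2 c * σ c i) τ' +
        (2 - 2 * ∑ k, min (p k * q' k) (p' k * q k)) := by
  classical
  set H : K → K → K → ℝ :=
    fun k a b => ∑ c, ∑ i, ∑ j, ∑ d', r a c * s b d' * σ c i * τ' d' j * g k i j with hH
  have hHabs : ∀ k a b, |H k a b| ≤ 1 := by
    intro k a b
    have habs : |H k a b| ≤ ∑ c, ∑ i, ∑ j, ∑ d', (r a c * σ c i) * (s b d' * τ' d' j) := by
      rw [hH]
      refine (Finset.abs_sum_le_sum_abs _ _).trans (Finset.sum_le_sum fun c _ => ?_)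
      refine (Finset.abs_sum_le_sum_abs _ _).trans (Finset.sum_le_sum fun i _ => ?_)
      refine (Finset.abs_sum_le_sum_abs _ _).trans (Finset.sum_le_sum fun j _ => ?_)
      refine (Finset.abs_sum_le_sum_abs _ _).trans (Finset.sum_le_sum fun d' _ => ?_)
      have h0 : 0 ≤ r a c * s b d' * σ c i * τ' d' j :=
        mul_nonneg (mul_nonneg (mul_nonneg ((hr a).1 c) ((hs b).1 d')) ((hσ c).1 i))
          ((hτ' d').1 j)
      rw [abs_mul, abs_of_nonneg h0]
      exact (mul_le_of_le_one_right h0 (hg k i j)).trans_eq (by ring)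
    have hsum : (∑ c, ∑ i, ∑ j, ∑ d', (r a c * σ c i) * (s b d' * τ' d' j)) = 1 := by
      have e1 : ∀ (c : C) (i : I),
          (∑ j, ∑ d', (r a c * σ c i) * (s b d' * τ' d' j)) = r a c * σ c i := by
        intro c i
        rw [Finset.sum_comm]
        have e2 : ∀ d', (∑ j, (r a c * σ c i) * (s b d' * τ' d' j))
            = (r a c * σ c i) * s b d' := by
          intro d'
          have e4 : ∀ j, (r a c * σ c i) * (s b d' * τ' d' j)
              = ((r a c * σ c i) * s b d') * τ' d' j := fun j => by ring
          simp only [e4]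
          rw [← Finset.mul_sum, (hτ' d').2, mul_one]
        simp only [e2]
        rw [← Finset.mul_sum, (hs b).2, mul_one]
      simp only [e1]
      have e3 : ∀ c, (∑ i, r a c * σ c i) = r a c := fun c => by
        rw [← Finset.mul_sum, (hσ c).2, mul_one]
      simp only [e3, (hr a).2]
    linarith [habs.trans_eq hsum]
  rw [pay_left u g σ τ' p q' r s hur, pay_right v g σ τ' q p' r s hvs]
  have hdiff : (∑ k, ∑ k2, p k * q' k2 * H k k k2) - (∑ k, ∑ k2, q k * p' k2 * H k k2 k)
      ≤ 2 - 2 * ∑ k, min (p k * q' k) (p' k * q k) := by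
    have step : ∀ k k2, p k * q' k2 * H k k k2 - q k * p' k2 * H k k2 k ≤
        (p k * q' k2 + p' k2 * q k) +
          (if k2 = k then |p k * q' k - p' k * q k| - (p k * q' k + p' k * q k) else 0) := by
      intro k k2
      by_cases h : k2 = k
      · subst h
        rw [if_pos rfl]
        have h1 := hHabs k2 k2 k2
        have h3 : p k2 * q' k2 * H k2 k2 k2 - q k2 * p' k2 * H k2 k2 k2
            = (p k2 * q' k2 - p' k2 * q k2) * H k2 k2 k2 := by ring
        rw [h3]
        have h4 : (p k2 * q' k2 - p' k2 * q k2) * H k2 k2 k2 ≤ |p k2 * q' k2 - p' k2 * q k2| := by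
          calc (p k2 * q' k2 - p' k2 * q k2) * H k2 k2 k2
              ≤ |(p k2 * q' k2 - p' k2 * q k2) * H k2 k2 k2| := le_abs_self _
            _ = |p k2 * q' k2 - p' k2 * q k2| * |H k2 k2 k2| := abs_mul _ _
            _ ≤ |p k2 * q' k2 - p' k2 * q k2| * 1 :=
                mul_le_mul_of_nonneg_left h1 (abs_nonneg _)
            _ = |p k2 * q' k2 - p' k2 * q k2| := mul_one _
        linarith
      · simp only [if_neg h, add_zero]
        have h1 := abs_le.mp (hHabs k k k2)
        have h2 := abs_le.mp (hHabs k k2 k)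
        have hx : 0 ≤ p k * q' k2 := mul_nonneg (hp0 k) (hq'.1 k2)
        have hy : 0 ≤ q k * p' k2 := mul_nonneg (hq0 k) (hp'.1 k2)
        have ha : p k * q' k2 * H k k k2 ≤ p k * q' k2 * 1 :=
          mul_le_mul_of_nonneg_left h1.2 hx
        have hb : q k * p' k2 * (-1) ≤ q k * p' k2 * H k k2 k :=
          mul_le_mul_of_nonneg_left h2.1 hy
        nlinarith
    have hmono : (∑ k, ∑ k2, (p k * q' k2 * H k k k2 - q k * p' k2 * H k k2 k))
        ≤ ∑ k, ∑ k2, ((p k * q' k2 + p' k2 * q k) +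
          (if k2 = k then |p k * q' k - p' k * q k| - (p k * q' k + p' k * q k) else 0)) :=
      Finset.sum_le_sum fun k _ => Finset.sum_le_sum fun k2 _ => step k k2
    have hrow : ∀ k, (∑ k2, ((p k * q' k2 + p' k2 * q k) +
        (if k2 = k then |p k * q' k - p' k * q k| - (p k * q' k + p' k * q k) else 0)))
        = p k + q k + (-2 * min (p k * q' k) (p' k * q k)) := by
      intro k
      have h1 : (∑ k2, p k * q' k2) = p k := by rw [← Finset.mul_sum, hq'.2, mul_one]
      have h2 : (∑ k2, p' k2 * q k) = q k := by rw [← Finset.sum_mul, hp'.2, one_mul]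
      have h3 : (∑ k2, (if k2 = k then
          |p k * q' k - p' k * q k| - (p k * q' k + p' k * q k) else 0))
          = |p k * q' k - p' k * q k| - (p k * q' k + p' k * q k) := by
        rw [Finset.sum_ite_eq' Finset.univ k
          (fun _ => |p k * q' k - p' k * q k| - (p k * q' k + p' k * q k))]
        simp
      rw [Finset.sum_add_distrib, Finset.sum_add_distrib, h1, h2, h3]
      have hmin : |p k * q' k - p' k * q k| - (p k * q' k + p' k * q k)
          = -2 * min (p k * q' k) (p' k * q k) := by
        rcases le_total (p k * q' k) (p' k * q k) with hle | hle
        · rw [min_eq_left hle, abs_of_nonpos (by linarith)]; ring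
        · rw [min_eq_right hle, abs_of_nonneg (by linarith)]; ring
      rw [hmin]
    have htot : (∑ k, ∑ k2, ((p k * q' k2 + p' k2 * q k) +
        (if k2 = k then |p k * q' k - p' k * q k| - (p k * q' k + p' k * q k) else 0)))
        = 2 - 2 * ∑ k, min (p k * q' k) (p' k * q k) := by
      rw [Finset.sum_congr rfl (fun k _ => hrow k)]
      rw [Finset.sum_add_distrib, Finset.sum_add_distrib, hpsum, hqsum, ← Finset.mul_sum]
      ring
    rw [← htot]
    calc (∑ k, ∑ k2, p k * q' k2 * H k k k2) - ∑ k, ∑ k2, q k * p' k2 * H k k2 k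
        = ∑ k, ∑ k2, (p k * q' k2 * H k k k2 - q k * p' k2 * H k k2 k) := by
          simp only [Finset.sum_sub_distrib]
      _ ≤ _ := hmono
  linarith
end Key

section Core

variable {K C D C' D' I J : Type*} [Fintype K] [Fintype C] [Fintype D] [Fintype C'] [Fintype D']
  [Fintype I] [Fintype J]

lemma core [Nonempty I] [Nonempty J]
    (u : K × C × D → ℝ) (v : K × C' × D' → ℝ) (hu : IsDist u) (hv : IsDist v)
    (p q p' q' : K → ℝ)
    (hp : ∀ k, (∑ c, ∑ d, u (k, c, d)) = p k)
    (hq : ∀ k, (∑ c', ∑ d', v (k, c', d')) = q k)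
    (hp' : IsDist p') (hq' : IsDist q')
    (g : K → I → J → ℝ) (hg : Bounded1 g) :
    gameVal u g ≤ gameVal v g + (2 - 2 * ∑ k, min (p k * q' k) (p' k * q k)) := by
  classical
  have hp0 : ∀ k, 0 ≤ p k := fun k =>
    hp k ▸ Finset.sum_nonneg fun c _ => Finset.sum_nonneg fun d _ => hu.1 _
  have hq0 : ∀ k, 0 ≤ q k := fun k =>
    hq k ▸ Finset.sum_nonneg fun c' _ => Finset.sum_nonneg fun d' _ => hv.1 _
  have hpsum : (∑ k, p k) = 1 := by
    have h := hu.2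
    simp only [Fintype.sum_prod_type] at h
    calc (∑ k, p k) = ∑ k, ∑ c, ∑ d, u (k, c, d) :=
          Finset.sum_congr rfl fun k _ => (hp k).symm
      _ = 1 := h
  have hqsum : (∑ k, q k) = 1 := by
    have h := hv.2
    simp only [Fintype.sum_prod_type] at h
    calc (∑ k, q k) = ∑ k, ∑ c', ∑ d', v (k, c', d') :=
          Finset.sum_congr rfl fun k _ => (hq k).symm
      _ = 1 := h
  have hCne : Nonempty C := by
    by_contra hc
    haveI := not_nonempty_iff.mp hc
    have h0 : ∀ k, p k = 0 := fun k => by rw [← hp k]; simp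
    exact one_ne_zero (hpsum.symm.trans (Finset.sum_eq_zero fun k _ => h0 k))
  have hD'ne : Nonempty D' := by
    by_contra hc
    haveI := not_nonempty_iff.mp hc
    have h0 : ∀ k, q k = 0 := fun k => by rw [← hq k]; simp
    exact one_ne_zero (hqsum.symm.trans (Finset.sum_eq_zero fun k _ => h0 k))
  set r : K → C → ℝ :=
    fun k c => if p k = 0 then (Fintype.card C : ℝ)⁻¹ else (∑ d, u (k, c, d)) / p k with hrdef
  set s : K → D' → ℝ :=
    fun k d' => if q k = 0 then (Fintype.card D' : ℝ)⁻¹ else (∑ c', v (k, c', d')) / q k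
    with hsdef
  have hr : ∀ k, IsDist (r k) := by
    intro k
    constructor
    · intro c
      rw [hrdef]
      dsimp only
      split
      · positivity
      · exact div_nonneg (Finset.sum_nonneg fun d _ => hu.1 _) (hp0 k)
    · rw [hrdef]
      dsimp only
      by_cases h : p k = 0
      · simp only [if_pos h]
        rw [Finset.sum_const, Finset.card_univ, nsmul_eq_mul]
        exact mul_inv_cancel₀ (Nat.cast_ne_zero.mpr Fintype.card_ne_zero)
      · simp only [if_neg h]
        rw [← Finset.sum_div, hp k, div_self h]
  have hs : ∀ k, IsDist (s k) := by
    intro k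
    constructor
    · intro d'
      rw [hsdef]
      dsimp only
      split
      · positivity
      · exact div_nonneg (Finset.sum_nonneg fun c' _ => hv.1 _) (hq0 k)
    · rw [hsdef]
      dsimp only
      by_cases h : q k = 0
      · simp only [if_pos h]
        rw [Finset.sum_const, Finset.card_univ, nsmul_eq_mul]
        exact mul_inv_cancel₀ (Nat.cast_ne_zero.mpr Fintype.card_ne_zero)
      · simp only [if_neg h]
        rw [← Finset.sum_div, Finset.sum_comm, hq k, div_self h]
  have hur : ∀ k c, (∑ d, u (k, c, d)) = p k * r k c := by
    intro k c
    rw [hrdef]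
    dsimp only
    by_cases h : p k = 0
    · simp only [if_pos h, h, zero_mul]
      have h5 : (∑ c, ∑ d, u (k, c, d)) = 0 := by rw [hp k, h]
      exact (Finset.sum_eq_zero_iff_of_nonneg
        (fun c _ => Finset.sum_nonneg fun d _ => hu.1 _)).mp h5 c (Finset.mem_univ c)
    · simp only [if_neg h]
      rw [mul_comm, div_mul_cancel₀ _ h]
  have hvs : ∀ k d', (∑ c', v (k, c', d')) = q k * s k d' := by
    intro k d'
    rw [hsdef]
    dsimp only
    by_cases h : q k = 0
    · simp only [if_pos h, h, zero_mul]
      have h5 : (∑ d', ∑ c', v (k, c', d')) = 0 := by rw [Finset.sum_comm, hq k, h]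
      exact (Finset.sum_eq_zero_iff_of_nonneg
        (fun d' _ => Finset.sum_nonneg fun c' _ => hv.1 _)).mp h5 d' (Finset.mem_univ d')
    · simp only [if_neg h]
      rw [mul_comm, div_mul_cancel₀ _ h]
  unfold gameVal
  refine csSup_le ⟨_, ⟨fun _ _ => (Fintype.card I : ℝ)⁻¹, unif_kernel, rfl⟩⟩ ?_
  rintro x ⟨σ, hσ, rfl⟩
  set σ' : C' → I → ℝ := fun _ i => ∑ k2, p' k2 * ∑ c, r k2 c * σ c i with hσ'def
  have hσ' : IsKernel σ' := fun _ => mix_kernel hp' hr hσ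
  have hbddYu : BddBelow {y : ℝ | ∃ τ0 : D → J → ℝ, IsKernel τ0 ∧ y = pay u g σ τ0} := by
    refine ⟨-1, ?_⟩
    rintro y ⟨τ0, hτ0, rfl⟩
    exact (abs_le.mp (abs_pay_le hu hσ hτ0 hg)).1
  have hbddYv : BddBelow {y : ℝ | ∃ τ0 : D' → J → ℝ, IsKernel τ0 ∧ y = pay v g σ' τ0} := by
    refine ⟨-1, ?_⟩
    rintro y ⟨τ0, hτ0, rfl⟩
    exact (abs_le.mp (abs_pay_le hv hσ' hτ0 hg)).1
  have hSvbdd : BddAbove {x : ℝ | ∃ σ0 : C' → I → ℝ, IsKernel σ0 ∧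
      x = sInf {y : ℝ | ∃ τ0 : D' → J → ℝ, IsKernel τ0 ∧ y = pay v g σ0 τ0}} := by
    refine ⟨1, ?_⟩
    rintro x ⟨σ0, hσ0, rfl⟩
    have hb : BddBelow {y : ℝ | ∃ τ0 : D' → J → ℝ, IsKernel τ0 ∧ y = pay v g σ0 τ0} := by
      refine ⟨-1, ?_⟩
      rintro y ⟨τ0, hτ0, rfl⟩
      exact (abs_le.mp (abs_pay_le hv hσ0 hτ0 hg)).1
    have hmem : pay v g σ0 (fun _ _ => (Fintype.card J : ℝ)⁻¹) ∈
        {y : ℝ | ∃ τ0 : D' → J → ℝ, IsKernel τ0 ∧ y = pay v g σ0 τ0} :=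
      ⟨_, unif_kernel, rfl⟩
    exact (csInf_le hb hmem).trans (abs_le.mp (abs_pay_le hv hσ0 unif_kernel hg)).2
  have h2 : sInf {y : ℝ | ∃ τ0 : D' → J → ℝ, IsKernel τ0 ∧ y = pay v g σ' τ0} ≤
      sSup {x : ℝ | ∃ σ0 : C' → I → ℝ, IsKernel σ0 ∧
        x = sInf {y : ℝ | ∃ τ0 : D' → J → ℝ, IsKernel τ0 ∧ y = pay v g σ0 τ0}} :=
    le_csSup hSvbdd ⟨σ', hσ', rfl⟩
  have h1 : sInf {y : ℝ | ∃ τ0 : D → J → ℝ, IsKernel τ0 ∧ y = pay u g σ τ0} -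
      (2 - 2 * ∑ k, min (p k * q' k) (p' k * q k)) ≤
      sInf {y : ℝ | ∃ τ0 : D' → J → ℝ, IsKernel τ0 ∧ y = pay v g σ' τ0} := by
    refine le_csInf ⟨_, ⟨fun _ _ => (Fintype.card J : ℝ)⁻¹, unif_kernel, rfl⟩⟩ ?_
    rintro y ⟨τ', hτ', rfl⟩
    have hτ : IsKernel (fun (_ : D) j => ∑ k2, q' k2 * ∑ d', s k2 d' * τ' d' j) :=
      fun _ => mix_kernel hq' hs hτ'
    have hle : sInf {y : ℝ | ∃ τ0 : D → J → ℝ, IsKernel τ0 ∧ y = pay u g σ τ0} ≤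
        pay u g σ (fun _ j => ∑ k2, q' k2 * ∑ d', s k2 d' * τ' d' j) :=
      csInf_le hbddYu ⟨_, hτ, rfl⟩
    have hkey := key_ineq u v g hg p q p' q' r s hp0 hq0 hpsum hqsum hp' hq' hr hs hur hvs
      σ τ' hσ hτ'
    rw [← hσ'def] at hkey
    linarith
  linarith

end Core

theorem stmt5 {K C D C' D' : Type*} [Fintype K] [Nonempty K]
    [Fintype C] [Fintype D] [Fintype C'] [Fintype D']
    (u : K × C × D → ℝ) (v : K × C' × D' → ℝ) (hu : IsDist u) (hv : IsDist v)
    (p q : K → ℝ)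
    (hp : ∀ k, ∑ c, ∑ d, u (k, c, d) = p k)
    (hq : ∀ k, ∑ c, ∑ d, v (k, c, d) = q k) :
    valueDist u v ≤ 2 * (1 - sSup {t : ℝ | ∃ p' q' : K → ℝ, IsDist p' ∧ IsDist q' ∧
        t = ∑ k, min (p k * q' k) (p' k * q k)}) ∧
      (p = q → valueDist u v ≤ 2 * (1 - ⨆ k, p k)) := by
  classical
  set T : Set ℝ := {t : ℝ | ∃ p' q' : K → ℝ, IsDist p' ∧ IsDist q' ∧
      t = ∑ k, min (p k * q' k) (p' k * q k)} with hT
  have hpdist : IsDist p := by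
    constructor
    · intro k
      rw [← hp k]
      exact Finset.sum_nonneg fun c _ => Finset.sum_nonneg fun d _ => hu.1 _
    · have h := hu.2
      simp only [Fintype.sum_prod_type] at h
      calc (∑ k, p k) = ∑ k, ∑ c, ∑ d, u (k, c, d) :=
            Finset.sum_congr rfl fun k _ => (hp k).symm
        _ = 1 := h
  have hqdist : IsDist q := by
    constructor
    · intro k
      rw [← hq k]
      exact Finset.sum_nonneg fun c _ => Finset.sum_nonneg fun d _ => hv.1 _
    · have h := hv.2
      simp only [Fintype.sum_prod_type] at h
      calc (∑ k, q k) = ∑ k, ∑ c, ∑ d, v (k, c, d) :=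
            Finset.sum_congr rfl fun k _ => (hq k).symm
        _ = 1 := h
  have hTne : T.Nonempty := ⟨_, p, p, hpdist, hpdist, rfl⟩
  have hTbdd : BddAbove T := by
    refine ⟨1, ?_⟩
    rintro t ⟨p', q', hp', hq', rfl⟩
    calc (∑ k, min (p k * q' k) (p' k * q k))
        ≤ ∑ k, p' k * q k := Finset.sum_le_sum fun k _ => min_le_right _ _
      _ ≤ ∑ k, p' k := Finset.sum_le_sum fun k _ => mul_le_of_le_one_right (hp'.1 k)
          (by
            calc q k ≤ ∑ k2, q k2 :=
                  Finset.single_le_sum (fun k2 _ => hqdist.1 k2) (Finset.mem_univ k)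
              _ = 1 := hqdist.2)
      _ = 1 := hp'.2
  have hXne : {x : ℝ | ∃ (m n : ℕ) (g : K → Fin (m + 1) → Fin (n + 1) → ℝ),
      Bounded1 g ∧ x = |gameVal u g - gameVal v g|}.Nonempty := by
    refine ⟨_, 0, 0, fun _ _ _ => 0, fun k i j => by norm_num, rfl⟩
  have hbound : ∀ x ∈ {x : ℝ | ∃ (m n : ℕ) (g : K → Fin (m + 1) → Fin (n + 1) → ℝ),
      Bounded1 g ∧ x = |gameVal u g - gameVal v g|}, ∀ t ∈ T, x ≤ 2 - 2 * t := by
    rintro x ⟨m, n, g, hg, rfl⟩ t ⟨p', q', hp', hq', rfl⟩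
    have hc1 := core u v hu hv p q p' q' hp hq hp' hq' g hg
    have hc2 := core v u hv hu q p q' p' hq hp hq' hp' g hg
    have heq : (∑ k, min (q k * p' k) (q' k * p k)) = ∑ k, min (p k * q' k) (p' k * q k) := by
      refine Finset.sum_congr rfl fun k _ => ?_
      rw [min_comm, mul_comm (q' k), mul_comm (q k)]
    rw [heq] at hc2
    rw [abs_sub_le_iff]
    constructor <;> linarith
  have h1 : valueDist u v ≤ 2 * (1 - sSup T) := by
    unfold valueDist
    refine csSup_le hXne ?_
    intro x hx
    have hs2 : sSup T ≤ (2 - x) / 2 :=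
      csSup_le hTne fun t ht => by have := hbound x hx t ht; linarith
    linarith
  refine ⟨h1, ?_⟩
  intro hpq
  subst hpq
  have hsup : (⨆ k, p k) ≤ sSup T := by
    refine ciSup_le fun k0 => ?_
    refine le_csSup hTbdd ?_
    refine ⟨(fun k => if k = k0 then 1 else 0), (fun k => if k = k0 then 1 else 0), ?_, ?_, ?_⟩
    · constructor
      · intro k; dsimp only; split <;> norm_num
      · simp
    · constructor
      · intro k; dsimp only; split <;> norm_num
      · simp
    · have he : ∀ k, min (p k * (if k = k0 then (1:ℝ) else 0))
          ((if k = k0 then (1:ℝ) else 0) * p k) = if k = k0 then p k else 0 := by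
        intro k; by_cases h : k = k0 <;> simp [h]
      rw [Finset.sum_congr rfl fun k _ => he k]
      simp
  linarith
end
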